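/- Fix integers m ≥ 2, n ≥ 0 and 0 ≤ k ≤ n. Then Σ_{j=0}^{k} (−1)^j C(k,j) (n−k+1)_j (m+k−1)_{k−j} / (m+n)_k = ((m+n−1)! / ((n−k)!·(m+k−2)!)) · ∫_0^1 x^{n−k} (1−x)^{m+k−2} (1−2x)^k dx. In other words, the coefficient T_k appearing in the closed form of the average outcome-collision probability equals the moment E[(1−2X)^k] for X distributed as Beta(n−k+1, m+k−1). -/

import Mathlib

open Finset intervalIntegral

/-- Pochhammer symbol `(x)_p = x (x+1) ⋯ (x+p-1)`. -/
noncomputable def poch (x : ℝ) (p : ℕ) : ℝ := ∏ i ∈ Finset.range p, (x + i)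

/-- The coefficient `T_k` in the closed form of the average
outcome-collision probability equals the moment `E[(1-2X)^k]` for
`X ∼ Beta(n-k+1, m+k-1)`. -/

lemma poch_nat (a p : ℕ) : poch ((a:ℝ) + 1) p = (a + p).factorial / a.factorial := by
  have h : (a.factorial : ℝ) ≠ 0 := Nat.cast_ne_zero.mpr a.factorial_ne_zero
  unfold poch
  induction p with
  | zero => simp [h]
  | succ p ih =>
    rw [Finset.prod_range_succ, ih, show a + (p+1) = (a+p) + 1 by ring, Nat.factorial_succ]
    field_simp
    push_cast
    ring

lemma beta_int (a b : ℕ) :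
    (∫ x in (0:ℝ)..1, x ^ a * (1 - x) ^ b)
      = (a.factorial : ℝ) * b.factorial / (a + b + 1).factorial := by
  have h := Complex.betaIntegral_eval_nat_add_one_right (u := (a:ℂ) + 1) (by simp; positivity) b
  rw [Complex.betaIntegral] at h
  have h2 : (∫ x : ℝ in (0:ℝ)..1, ((x:ℂ)) ^ ((((a:ℂ)+1) - 1)) * ((1 - (x:ℂ)) ^ (((b:ℂ)+1) - 1)))
      = ((∫ x in (0:ℝ)..1, x ^ a * (1-x) ^ b : ℝ) : ℂ) := by
    rw [← intervalIntegral.integral_ofReal]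
    apply intervalIntegral.integral_congr
    intro x _
    have e1 : (((a:ℂ)+1) - 1) = ((a:ℕ) : ℂ) := by ring
    have e2 : (((b:ℂ)+1) - 1) = ((b:ℕ) : ℂ) := by push_cast; ring
    simp only [e1, e2, Complex.cpow_natCast]
    push_cast
    ring
  rw [h2] at h
  have h3 : (∏ j ∈ Finset.range (b+1), (((a:ℂ)+1) + j)) = ((a + b + 1).factorial : ℂ) / (a.factorial : ℂ) := by
    have h4 : (∏ i ∈ Finset.range (b+1), ((a:ℝ) + 1 + i)) = ((a + b + 1).factorial : ℝ) / a.factorial := by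
      rw [show (∏ i ∈ Finset.range (b+1), ((a:ℝ) + 1 + i)) = poch ((a:ℝ)+1) (b+1) from rfl,
        poch_nat]
      norm_num [show a + (b+1) = a + b + 1 by ring]
    calc (∏ j ∈ Finset.range (b+1), (((a:ℂ)+1) + j))
        = (((∏ i ∈ Finset.range (b+1), ((a:ℝ) + 1 + i)) : ℝ) : ℂ) := by push_cast; rfl
      _ = _ := by rw [h4]; push_cast; ring
  rw [h3] at h
  have hfa : ((a.factorial : ℂ)) ≠ 0 := Nat.cast_ne_zero.mpr a.factorial_ne_zero
  have hfab : (((a+b+1).factorial : ℂ)) ≠ 0 := Nat.cast_ne_zero.mpr (a+b+1).factorial_ne_zero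
  have : ((∫ x in (0:ℝ)..1, x ^ a * (1-x) ^ b : ℝ) : ℂ) = ((a.factorial : ℝ) * b.factorial / (a + b + 1).factorial : ℝ) := by
    rw [h]; push_cast; field_simp
  exact_mod_cast this

theorem stmt4 (m n k : ℕ) (hm : 2 ≤ m) (hk : k ≤ n) :
    (∑ j ∈ Finset.range (k + 1),
        (-1 : ℝ) ^ j * (k.choose j : ℝ) * poch ((n : ℝ) - k + 1) j *
          poch ((m : ℝ) + k - 1) (k - j)) / poch ((m : ℝ) + n) k
      = (((m + n - 1).factorial : ℝ) / (((n - k).factorial : ℝ) * ((m + k - 2).factorial : ℝ)))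
          * ∫ x in (0:ℝ)..1, x ^ (n - k) * (1 - x) ^ (m + k - 2) * (1 - 2 * x) ^ k := by
  -- rewrite the integrand as a finite sum
  have hint : ∀ x : ℝ, x ^ (n - k) * (1 - x) ^ (m + k - 2) * (1 - 2 * x) ^ k
      = ∑ j ∈ Finset.range (k + 1), ((-1:ℝ) ^ j * (k.choose j : ℝ)) *
          (x ^ (n - k + j) * (1 - x) ^ (m + k - 2 + (k - j))) := by
    intro x
    rw [show (1 - 2 * x) = (-x) + (1 - x) by ring, add_pow, Finset.mul_sum]
    apply Finset.sum_congr rfl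
    intro j hj
    rw [pow_add, pow_add, neg_pow]
    ring
  have hI : (∫ x in (0:ℝ)..1, x ^ (n - k) * (1 - x) ^ (m + k - 2) * (1 - 2 * x) ^ k)
      = ∑ j ∈ Finset.range (k + 1), ((-1:ℝ) ^ j * (k.choose j : ℝ)) *
          ((((n - k + j).factorial : ℝ) * ((m + k - 2 + (k - j)).factorial : ℝ))
            / ((m + n - 1 + k).factorial : ℝ)) := by
    rw [intervalIntegral.integral_congr (g := fun x => ∑ j ∈ Finset.range (k + 1),
        ((-1:ℝ) ^ j * (k.choose j : ℝ)) * (x ^ (n - k + j) * (1 - x) ^ (m + k - 2 + (k - j))))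
        (fun x _ => hint x)]
    rw [intervalIntegral.integral_finset_sum]
    · apply Finset.sum_congr rfl
      intro j hj
      have hjk : j ≤ k := Nat.lt_succ_iff.mp (Finset.mem_range.mp hj)
      rw [intervalIntegral.integral_const_mul, beta_int]
      have : n - k + j + (m + k - 2 + (k - j)) + 1 = m + n - 1 + k := by omega
      rw [this]
    · intro j hj
      apply IntervalIntegrable.const_mul
      apply Continuous.intervalIntegrable
      continuity
  rw [hI]
  -- rewrite pochhammers as factorial quotients
  have e1 : (n:ℝ) - k + 1 = ((n - k : ℕ) : ℝ) + 1 := by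
    rw [Nat.cast_sub hk]
  have e2 : (m:ℝ) + k - 1 = ((m + k - 2 : ℕ) : ℝ) + 1 := by
    rw [Nat.cast_sub (by omega : 2 ≤ m + k)]; push_cast; ring
  have e3 : (m:ℝ) + n = ((m + n - 1 : ℕ) : ℝ) + 1 := by
    rw [Nat.cast_sub (by omega : 1 ≤ m + n)]; push_cast; ring
  rw [e3, poch_nat, Finset.mul_sum, Finset.sum_div]
  apply Finset.sum_congr rfl
  intro j hj
  have hjk : j ≤ k := Nat.lt_succ_iff.mp (Finset.mem_range.mp hj)
  rw [e1, e2, poch_nat, poch_nat]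
  have F : ∀ p : ℕ, (p.factorial : ℝ) ≠ 0 := fun p => Nat.cast_ne_zero.mpr p.factorial_ne_zero
  field_simp
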